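/- Let Φ be a gradient semiflow with finitely many equilibria and γ a full solution with compact orbit closure. Then ω(γ) = {e} and α(γ) = {e'} for some equilibria e, e'. -/

import Mathlib

open Set Filter Topology

/-- ω-limit set of a curve. -/
def omegaLimitSol {X : Type*} [TopologicalSpace X] (γ : ℝ → X) : Set X :=
  {y | ∃ u : ℕ → ℝ, Tendsto u atTop atTop ∧ Tendsto (fun n => γ (u n)) atTop (nhds y)}

/-- α-limit set of a curve. -/
def alphaLimitSol {X : Type*} [TopologicalSpace X] (γ : ℝ → X) : Set X :=
  {y | ∃ u : ℕ → ℝ, Tendsto u atTop atBot ∧ Tendsto (fun n => γ (u n)) atTop (nhds y)}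

/-- The ω-limit set is nonempty if the orbit closure is compact. -/
lemma omegaLimitSol_nonempty {X : Type*} [MetricSpace X] (γ : ℝ → X)
    (hpre : IsCompact (closure (range γ))) : (omegaLimitSol γ).Nonempty := by
  have hmem : ∀ n : ℕ, γ (n : ℝ) ∈ closure (range γ) :=
    fun n => subset_closure (mem_range_self _)
  obtain ⟨z, hz, φ, hφ, hconv⟩ := hpre.tendsto_subseq hmem
  refine ⟨z, fun n => ((φ n : ℕ) : ℝ), ?_, hconv⟩
  exact tendsto_natCast_atTop_atTop.comp hφ.tendsto_atTop

/-- If the ω-limit set is finite, it is a subsingleton (for continuous γ with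
compact orbit closure). -/
lemma omegaLimitSol_subsingleton {X : Type*} [MetricSpace X] (γ : ℝ → X)
    (hγ : Continuous γ) (hpre : IsCompact (closure (range γ)))
    (hfin : (omegaLimitSol γ).Finite) : (omegaLimitSol γ).Subsingleton := by
  intro a ha b hb
  by_contra hab
  -- the set of pairwise distances
  set Ω := omegaLimitSol γ with hΩ
  set P : Set ℝ := (fun p : X × X => dist p.1 p.2) '' ((Ω ×ˢ Ω) ∩ {p | p.1 ≠ p.2}) with hP
  have hPfin : P.Finite := ((hfin.prod hfin).inter_of_left _).image _
  have hPne : P.Nonempty := ⟨dist a b, ⟨(a, b), ⟨⟨ha, hb⟩, hab⟩, rfl⟩⟩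
  have hPmem := hPne.csInf_mem hPfin
  obtain ⟨⟨x₀, y₀⟩, ⟨⟨hx₀, hy₀⟩, hxy₀⟩, hd₀⟩ := hPmem
  set ε : ℝ := sInf P / 3 with hε
  have hεpos : 0 < ε := by
    have : (0:ℝ) < sInf P := by
      rw [← hd₀]; exact dist_pos.2 hxy₀
    positivity
  have hsep : ∀ x ∈ Ω, ∀ y ∈ Ω, x ≠ y → 3 * ε ≤ dist x y := by
    intro x hx y hy hxy
    have : sInf P ≤ dist x y := csInf_le hPfin.bddBelow ⟨(x, y), ⟨⟨hx, hy⟩, hxy⟩, rfl⟩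
    rw [hε]; linarith
  -- eventually γ t is ε-close to Ω
  have hnear : ∃ T : ℝ, ∀ t ≥ T, ∃ x ∈ Ω, dist (γ t) x < ε := by
    by_contra h
    push_neg at h
    choose f hf1 hf2 using h
    set u : ℕ → ℝ := fun n => f (n : ℝ) with hu
    have humem : ∀ n, γ (u n) ∈ closure (range γ) := fun n => subset_closure (mem_range_self _)
    obtain ⟨z, hz, φ, hφ, hconv⟩ := hpre.tendsto_subseq humem
    have huT : Tendsto u atTop atTop :=
      tendsto_atTop_mono (fun n => hf1 (n : ℝ)) tendsto_natCast_atTop_atTop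
    have hzΩ : z ∈ Ω := ⟨fun n => u (φ n), huT.comp hφ.tendsto_atTop, hconv⟩
    have hdist : Tendsto (fun n => dist (γ (u (φ n))) z) atTop (𝓝 (dist z z)) :=
      hconv.dist tendsto_const_nhds
    rw [dist_self] at hdist
    have : ε ≤ 0 := ge_of_tendsto' hdist (fun n => hf2 ((φ n : ℕ) : ℝ) z hzΩ)
    linarith
  obtain ⟨T, hT⟩ := hnear
  -- connectedness argument
  set U : Set ℝ := γ ⁻¹' (Metric.ball a ε) with hU
  set W : Set ℝ := γ ⁻¹' (⋃ x ∈ Ω \ {a}, Metric.ball x ε) with hW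
  have hUopen : IsOpen U := Metric.isOpen_ball.preimage hγ
  have hWopen : IsOpen W := (isOpen_biUnion (fun _ _ => Metric.isOpen_ball)).preimage hγ
  have hcover : Ici T ⊆ U ∪ W := by
    intro t ht
    obtain ⟨x, hx, hdx⟩ := hT t ht
    by_cases hxa : x = a
    · left; rw [hU]; simpa [hxa] using hdx
    · right; rw [hW]
      exact mem_preimage.2 (mem_biUnion ⟨hx, hxa⟩ (Metric.mem_ball.2 hdx))
  have hUne : (Ici T ∩ U).Nonempty := by
    obtain ⟨u, hut, hconv⟩ := ha
    have h1 : ∀ᶠ n in atTop, T ≤ u n := hut.eventually_ge_atTop T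
    have h2 : ∀ᶠ n in atTop, dist (γ (u n)) a < ε :=
      (Metric.tendsto_nhds.1 hconv) ε hεpos
    obtain ⟨n, hn1, hn2⟩ := (h1.and h2).exists
    exact ⟨u n, hn1, hn2⟩
  have hWne : (Ici T ∩ W).Nonempty := by
    have hbΩ := hb
    have hba : b ∉ ({a} : Set X) := by
      simp only [mem_singleton_iff]; exact fun h => hab h.symm
    obtain ⟨u, hut, hconv⟩ := hb
    have h1 : ∀ᶠ n in atTop, T ≤ u n := hut.eventually_ge_atTop T
    have h2 : ∀ᶠ n in atTop, dist (γ (u n)) b < ε :=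
      (Metric.tendsto_nhds.1 hconv) ε hεpos
    obtain ⟨n, hn1, hn2⟩ := (h1.and h2).exists
    refine ⟨u n, hn1, ?_⟩
    rw [hW]
    exact mem_preimage.2 (mem_biUnion ⟨hbΩ, hba⟩ (Metric.mem_ball.2 hn2))
  obtain ⟨t, _, htU, htW⟩ := isPreconnected_Ici U W hUopen hWopen hcover hUne hWne
  have hU' : dist (γ t) a < ε := by simpa [hU] using htU
  rw [hW, mem_preimage, mem_iUnion₂] at htW
  obtain ⟨x, ⟨hxΩ, hxa⟩, hball⟩ := htW
  have hx' : dist (γ t) x < ε := Metric.mem_ball.1 hball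
  have h3 : 3 * ε ≤ dist a x := hsep a ha x hxΩ (fun h => hxa (h ▸ rfl))
  have htri : dist a x ≤ dist (γ t) a + dist (γ t) x := by
    rw [dist_comm (γ t) a]; exact dist_triangle a (γ t) x
  linarith

/-- ω-limit points of a solution-like curve are equilibria. -/
lemma omegaLimitSol_subset_equilibria {X : Type*} [MetricSpace X]
    (Φ : ℝ → X → X)
    (hcont : ContinuousOn (fun p : ℝ × X => Φ p.1 p.2) (Ici 0 ×ˢ univ))
    (V : X → ℝ) (hV : Continuous V)
    (hgrad : ∀ x, (∀ t ≥ (0:ℝ), V (Φ t x) = V x) → ∀ t ≥ (0:ℝ), Φ t x = x)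
    (γ : ℝ → X) (c : ℝ) (hc : Tendsto (fun t => V (γ t)) atTop (𝓝 c))
    (σ : ℝ)
    (hsol' : ∀ r : ℝ, ∀ t ≥ (0:ℝ), γ (r + σ * t) = Φ t (γ r)) :
    omegaLimitSol γ ⊆ {x : X | ∀ t ≥ (0:ℝ), Φ t x = x} := by
  have hΦt : ∀ t : ℝ, 0 ≤ t → Continuous (fun x => Φ t x) := by
    intro t ht
    exact hcont.comp_continuous (continuous_const.prodMk continuous_id)
      (fun x => ⟨ht, mem_univ x⟩)
  have hVΩ : ∀ z ∈ omegaLimitSol γ, V z = c := by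
    rintro z ⟨u, hut, hconv⟩
    have h1 : Tendsto (fun n => V (γ (u n))) atTop (𝓝 (V z)) :=
      (hV.tendsto z).comp hconv
    have h2 : Tendsto (fun n => V (γ (u n))) atTop (𝓝 c) := hc.comp hut
    exact tendsto_nhds_unique h1 h2
  have hinv : ∀ z ∈ omegaLimitSol γ, ∀ t ≥ (0:ℝ), Φ t z ∈ omegaLimitSol γ := by
    rintro z ⟨u, hut, hconv⟩ t ht
    refine ⟨fun n => u n + σ * t, tendsto_atTop_add_const_right atTop (σ * t) hut, ?_⟩
    have h1 : Tendsto (fun n => Φ t (γ (u n))) atTop (𝓝 (Φ t z)) :=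
      ((hΦt t ht).tendsto z).comp hconv
    refine h1.congr (fun n => ?_)
    exact (hsol' (u n) t ht).symm
  intro y hy
  refine hgrad y (fun t ht => ?_)
  rw [hVΩ _ (hinv y hy t ht), hVΩ y hy]

/-- The α-limit set of γ equals the ω-limit set of the time-reversed curve. -/
lemma alphaLimitSol_eq {X : Type*} [TopologicalSpace X] (γ : ℝ → X) :
    alphaLimitSol γ = omegaLimitSol (fun t => γ (-t)) := by
  ext y
  constructor
  · rintro ⟨u, hut, hconv⟩
    refine ⟨fun n => -(u n), tendsto_neg_atBot_atTop.comp hut, ?_⟩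
    simpa [neg_neg] using hconv
  · rintro ⟨u, hut, hconv⟩
    exact ⟨fun n => -(u n), tendsto_neg_atTop_atBot.comp hut, hconv⟩

/-- For a gradient semiflow with finitely many equilibria, every full
solution with compact orbit closure has ω(γ) = {e} and α(γ) = {e'} for equilibria e, e'. -/
theorem stmt8 {X : Type*} [MetricSpace X]
    (Φ : ℝ → X → X)
    (hcont : ContinuousOn (fun p : ℝ × X => Φ p.1 p.2) (Ici 0 ×ˢ univ))
    (hzero : ∀ x, Φ 0 x = x)
    (hadd : ∀ t s : ℝ, 0 ≤ t → 0 ≤ s → ∀ x, Φ (t + s) x = Φ t (Φ s x))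
    (V : X → ℝ) (hV : Continuous V)
    (hdec : ∀ x, ∀ s t : ℝ, 0 ≤ s → s ≤ t → V (Φ t x) ≤ V (Φ s x))
    (hgrad : ∀ x, (∀ t ≥ (0:ℝ), V (Φ t x) = V x) → ∀ t ≥ (0:ℝ), Φ t x = x)
    (hfin : {x : X | ∀ t ≥ (0:ℝ), Φ t x = x}.Finite)
    (γ : ℝ → X)
    (hsol : ∀ s t : ℝ, s ≤ t → γ t = Φ (t - s) (γ s))
    (hpre : IsCompact (closure (range γ))) :
    ∃ e e' : X, (∀ t ≥ (0:ℝ), Φ t e = e) ∧ (∀ t ≥ (0:ℝ), Φ t e' = e') ∧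
      omegaLimitSol γ = {e} ∧ alphaLimitSol γ = {e'} := by
  -- continuity of γ
  have hγc : Continuous γ := by
    rw [continuous_iff_continuousAt]
    intro t0
    set s : ℝ := t0 - 1 with hs
    have hg : ContinuousOn (fun t => Φ (t - s) (γ s)) (Ici s) := by
      refine hcont.comp (Continuous.continuousOn
        ((continuous_id.sub continuous_const).prodMk continuous_const)) ?_
      intro t ht
      exact ⟨(show (0:ℝ) ≤ t - s from sub_nonneg.2 ht), mem_univ _⟩
    have hmem : Ici s ∈ 𝓝 t0 := Ici_mem_nhds (by simp [hs])
    have hgA : ContinuousAt (fun t => Φ (t - s) (γ s)) t0 := hg.continuousAt hmem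
    refine hgA.congr ?_
    filter_upwards [hmem] with t ht
    exact (hsol s t ht).symm
  -- V ∘ γ is antitone
  have hmono : Antitone (fun t => V (γ t)) := by
    intro s t hst
    show V (γ t) ≤ V (γ s)
    have h1 : γ t = Φ (t - s) (γ s) := hsol s t hst
    have h2 : V (Φ (t - s) (γ s)) ≤ V (Φ 0 (γ s)) :=
      hdec (γ s) 0 (t - s) le_rfl (by linarith)
    rw [h1]
    simpa [hzero] using h2
  -- boundedness of V ∘ γ
  have himg : IsCompact (V '' closure (range γ)) := hpre.image hV
  have hsubset : range (fun t => V (γ t)) ⊆ V '' closure (range γ) := by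
    rintro _ ⟨t, rfl⟩
    exact ⟨γ t, subset_closure (mem_range_self t), rfl⟩
  have hbb : BddBelow (range (fun t => V (γ t))) := himg.bddBelow.mono hsubset
  have hba : BddAbove (range (fun t => V (γ t))) := himg.bddAbove.mono hsubset
  have hc : Tendsto (fun t => V (γ t)) atTop (𝓝 (⨅ t, V (γ t))) :=
    tendsto_atTop_ciInf hmono hbb
  have hc' : Tendsto (fun t => V (γ t)) atBot (𝓝 (⨆ t, V (γ t))) :=
    tendsto_atBot_ciSup hmono hba
  -- ω-limit set
  have hωsub : omegaLimitSol γ ⊆ {x : X | ∀ t ≥ (0:ℝ), Φ t x = x} := by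
    refine omegaLimitSol_subset_equilibria Φ hcont V hV hgrad γ _ hc 1 ?_
    intro r t ht
    have := hsol r (r + 1 * t) (by linarith)
    simpa using this
  obtain ⟨e, he⟩ := omegaLimitSol_nonempty γ hpre
  have hωss : (omegaLimitSol γ).Subsingleton :=
    omegaLimitSol_subsingleton γ hγc hpre (hfin.subset hωsub)
  have hωeq : omegaLimitSol γ = {e} := hωss.eq_singleton_of_mem he
  -- α-limit set, via time reversal
  set δ : ℝ → X := fun t => γ (-t) with hδ
  have hδc : Continuous δ := hγc.comp continuous_neg
  have hrange : range δ = range γ := by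
    ext x
    constructor
    · rintro ⟨t, rfl⟩; exact ⟨-t, rfl⟩
    · rintro ⟨t, rfl⟩; exact ⟨-t, by simp [hδ]⟩
  have hδpre : IsCompact (closure (range δ)) := by rwa [hrange]
  have hδc' : Tendsto (fun t => V (δ t)) atTop (𝓝 (⨆ t, V (γ t))) :=
    hc'.comp tendsto_neg_atTop_atBot
  have hαsub : omegaLimitSol δ ⊆ {x : X | ∀ t ≥ (0:ℝ), Φ t x = x} := by
    refine omegaLimitSol_subset_equilibria Φ hcont V hV hgrad δ _ hδc' (-1) ?_
    intro r t ht
    have h1 : γ (t - r) = Φ (t - r - (-r)) (γ (-r)) := hsol (-r) (t - r) (by linarith)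
    have h2 : δ (r + (-1) * t) = γ (t - r) := by simp [hδ]; ring_nf
    rw [h2, h1]
    ring_nf
    rfl
  obtain ⟨e', he'⟩ := omegaLimitSol_nonempty δ hδpre
  have hαss : (omegaLimitSol δ).Subsingleton :=
    omegaLimitSol_subsingleton δ hδc hδpre (hfin.subset hαsub)
  have hαeq : omegaLimitSol δ = {e'} := hαss.eq_singleton_of_mem he'
  refine ⟨e, e', hωsub (hωeq ▸ rfl), hαsub (hαeq ▸ rfl), hωeq, ?_⟩
  rw [alphaLimitSol_eq]
  exact hαeq
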